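/- arXiv:1210.0184 — 2 statements merged into one kernel-verified Lean document; each statement's English description precedes it below -/
import Mathlib

section
/- Let T = [[a,b],[c,d]] be a J-unitary operator on K and let z be a complex number with |z| = 1. Then for every φ ∈ K one has Tφ = zφ if and only if V(z̄T)φ = φ. In particular ker(T − z·1) = ker(V(z̄T) − 1), so the geometric multiplicity of z as an eigenvalue of T equals the multiplicity of 1 as an eigenvalue of the unitary V(z̄T). -/
noncomputable section

open ContinuousLinearMap

variable {H : Type*} [NormedAddCommGroup H] [InnerProductSpace ℂ H] [CompleteSpace H]
  [TopologicalSpace.SeparableSpace H]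

local notation "K" => WithLp 2 (H × H)

/-- The 2×2 block operator `[[a,b],[c,d]]` on `K = H ⊕ H`. -/
def blk (a b c d : H →L[ℂ] H) : K →L[ℂ] K :=
  (((WithLp.prodContinuousLinearEquiv 2 ℂ H H).symm : (H × H) →L[ℂ] K).comp
      ((((a.comp (fst ℂ H H)) + (b.comp (snd ℂ H H))).prod
        ((c.comp (fst ℂ H H)) + (d.comp (snd ℂ H H)))))).comp
    ((WithLp.prodContinuousLinearEquiv 2 ℂ H H : K →L[ℂ] (H × H)))

/-- The fundamental symmetry `J = [[1,0],[0,-1]]`. -/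
def fundJ : K →L[ℂ] K := blk 1 0 0 (-1)

/-- A bounded operator `T` on the Krein space `(K, J)` is `J`-unitary if it is invertible
and `T* J T = J`. -/
def IsJUnitary (T : K →L[ℂ] K) : Prop :=
  IsUnit T ∧ star T * fundJ * T = fundJ

/- ### Auxiliary lemmas -/

lemma blk_fst (a b c d : H →L[ℂ] H) (φ : K) : ((blk a b c d) φ).ofLp.1 = a φ.ofLp.1 + b φ.ofLp.2 := rfl

lemma blk_snd (a b c d : H →L[ℂ] H) (φ : K) : ((blk a b c d) φ).ofLp.2 = c φ.ofLp.1 + d φ.ofLp.2 := rfl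

lemma K_ext {φ ψ : K} (h1 : φ.ofLp.1 = ψ.ofLp.1) (h2 : φ.ofLp.2 = ψ.ofLp.2) : φ = ψ := WithLp.ofLp_injective 2 (Prod.ext h1 h2)

lemma blk_mul (a b c d a' b' c' d' : H →L[ℂ] H) :
    blk a b c d * blk a' b' c' d' =
      blk (a*a' + b*c') (a*b' + b*d') (c*a' + d*c') (c*b' + d*d') := by
  refine ContinuousLinearMap.ext fun φ => K_ext ?_ ?_ <;>
    simp only [ContinuousLinearMap.mul_apply, blk_fst, blk_snd,
      ContinuousLinearMap.add_apply, map_add] <;> abel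

lemma blk_one : blk (1 : H →L[ℂ] H) 0 0 1 = 1 := by
  refine ContinuousLinearMap.ext fun φ => K_ext ?_ ?_ <;>
    simp only [blk_fst, blk_snd, ContinuousLinearMap.one_apply,
      ContinuousLinearMap.zero_apply, add_zero, zero_add]

lemma star_blk (a b c d : H →L[ℂ] H) :
    star (blk a b c d) = blk (star a) (star c) (star b) (star d) := by
  rw [ContinuousLinearMap.star_eq_adjoint]
  refine (((ContinuousLinearMap.eq_adjoint_iff _ _).mpr fun x y => ?_)).symm
  simp only [WithLp.prod_inner_apply, blk_fst, blk_snd, inner_add_left, inner_add_right,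
    ContinuousLinearMap.star_eq_adjoint, ContinuousLinearMap.adjoint_inner_left]
  ring

lemma blk_inj {a b c d a' b' c' d' : H →L[ℂ] H} (h : blk a b c d = blk a' b' c' d') :
    a = a' ∧ b = b' ∧ c = c' ∧ d = d' := by
  have h1 : ∀ x : H, ∀ y : H,
      (a x + b y = a' x + b' y) ∧ (c x + d y = c' x + d' y) := by
    intro x y
    have := DFunLike.congr_fun h ((WithLp.equiv 2 (H × H)).symm (x, y))
    exact ⟨congrArg (fun ψ : K => ψ.ofLp.1) this, congrArg (fun ψ : K => ψ.ofLp.2) this⟩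
  refine ⟨ContinuousLinearMap.ext fun x => ?_, ContinuousLinearMap.ext fun y => ?_,
    ContinuousLinearMap.ext fun x => ?_, ContinuousLinearMap.ext fun y => ?_⟩
  · simpa using (h1 x 0).1
  · simpa using (h1 0 y).1
  · simpa using (h1 x 0).2
  · simpa using (h1 0 y).2

lemma isUnit_of_left_right {M : Type*} [Monoid M] {x u v : M}
    (hu : u * x = 1) (hv : x * v = 1) : IsUnit x :=
  ⟨⟨x, v, hv, by
    have huv : u = v := by rw [← one_mul v, ← hu, mul_assoc, hv, mul_one]
    rw [← huv]; exact hu⟩, rfl⟩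

/-- Theorem 3.12 / Proposition 3.13 of the paper: for a `J`-unitary
`T = [[a,b],[c,d]]` and `z` on the unit circle, `φ` is an eigenvector of `T` for the
eigenvalue `z` if and only if it is a fixed vector of the unitary
`V(z̄T) = [[z̄(a*)⁻¹, bd⁻¹],[−d⁻¹c, zd⁻¹]]`; in particular the eigenspaces coincide. -/
theorem eigenvalue_unit_circle_iff_fixed_point (a b c d : H →L[ℂ] H)
    (hT : IsJUnitary (blk a b c d)) (z : ℂ) (hz : ‖z‖ = 1) :
    (∀ φ : K, (blk a b c d) φ = z • φ ↔
      (blk ((starRingEnd ℂ z) • Ring.inverse (star a)) (b * Ring.inverse d)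
        (-(Ring.inverse d * c)) (z • Ring.inverse d)) φ = φ) ∧
    LinearMap.ker (((blk a b c d - z • (1 : K →L[ℂ] K) : K →L[ℂ] K) : K →ₗ[ℂ] K)) =
      LinearMap.ker (((blk ((starRingEnd ℂ z) • Ring.inverse (star a)) (b * Ring.inverse d)
        (-(Ring.inverse d * c)) (z • Ring.inverse d) - (1 : K →L[ℂ] K) : K →L[ℂ] K) : K →ₗ[ℂ] K)) := by
  obtain ⟨hu, hJ⟩ := hT
  have hstar : star (blk a b c d) = blk (star a) (star c) (star b) (star d) := star_blk a b c d
  have hJblk : (fundJ : K →L[ℂ] K) = blk 1 0 0 (-1) := rfl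
  have hJJ : (fundJ : K →L[ℂ] K) * fundJ = 1 := by
    rw [hJblk, blk_mul]
    rw [show ((1:H →L[ℂ] H)*1 + 0*0) = 1 by noncomm_ring,
      show ((1:H →L[ℂ] H)*0 + 0*(-1)) = 0 by noncomm_ring,
      show ((0:H →L[ℂ] H)*1 + (-1)*0) = 0 by noncomm_ring,
      show ((0:H →L[ℂ] H)*0 + (-1)*(-1)) = 1 by noncomm_ring]
    exact blk_one
  -- the operator `T J T* = J`
  obtain ⟨U, hU⟩ := hu
  have hTS : blk a b c d * (↑U⁻¹ : K →L[ℂ] K) = 1 := by rw [← hU]; exact U.mul_inv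
  have hST : (↑U⁻¹ : K →L[ℂ] K) * blk a b c d = 1 := by rw [← hU]; exact U.inv_mul
  have h1 : star (blk a b c d) * fundJ = fundJ * (↑U⁻¹ : K →L[ℂ] K) := by
    calc star (blk a b c d) * fundJ
        = star (blk a b c d) * fundJ * (blk a b c d * (↑U⁻¹ : K →L[ℂ] K)) := by
          rw [hTS, mul_one]
      _ = (star (blk a b c d) * fundJ * blk a b c d) * (↑U⁻¹ : K →L[ℂ] K) := by
          rw [← mul_assoc]
      _ = fundJ * (↑U⁻¹ : K →L[ℂ] K) := by rw [hJ]
  have hstarT : star (blk a b c d) = fundJ * (↑U⁻¹ : K →L[ℂ] K) * fundJ := by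
    calc star (blk a b c d) = star (blk a b c d) * (fundJ * fundJ) := by rw [hJJ, mul_one]
      _ = (star (blk a b c d) * fundJ) * fundJ := by rw [mul_assoc]
      _ = fundJ * (↑U⁻¹ : K →L[ℂ] K) * fundJ := by rw [h1]
  have hJ' : blk a b c d * fundJ * star (blk a b c d) = fundJ := by
    rw [hstarT]
    calc blk a b c d * fundJ * (fundJ * (↑U⁻¹ : K →L[ℂ] K) * fundJ)
        = blk a b c d * (fundJ * fundJ) * (↑U⁻¹ : K →L[ℂ] K) * fundJ := by
          simp only [mul_assoc]
      _ = fundJ := by rw [hJJ, mul_one, hTS, one_mul]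
  -- extract the eight block identities
  have hLcomp : star (blk a b c d) * fundJ * blk a b c d =
      blk (star a * a - star c * c) (star a * b - star c * d)
        (star b * a - star d * c) (star b * b - star d * d) := by
    rw [hstar, hJblk, blk_mul, blk_mul]
    congr 1 <;> noncomm_ring
  have hRcomp : blk a b c d * fundJ * star (blk a b c d) =
      blk (a * star a - b * star b) (a * star c - b * star d)
        (c * star a - d * star b) (c * star c - d * star d) := by
    rw [hstar, hJblk, blk_mul, blk_mul]
    congr 1 <;> noncomm_ring
  rw [hLcomp, hJblk] at hJ
  rw [hRcomp, hJblk] at hJ'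
  obtain ⟨i1, i2, i3, i4⟩ := blk_inj hJ
  obtain ⟨j1, j2, j3, j4⟩ := blk_inj hJ'
  -- invertibility of `a` and `d`
  have hsaa : star a * a = 1 + star c * c := by
    have h := i1; rw [sub_eq_iff_eq_add] at h; rw [h]; try abel
  have haas : a * star a = 1 + b * star b := by
    have h := j1; rw [sub_eq_iff_eq_add] at h; rw [h]; try abel
  have hsdd : star d * d = 1 + star b * b := by
    have h := i4; rw [sub_eq_iff_eq_add] at h; rw [h]; try abel
  have hdds : d * star d = 1 + c * star c := by
    have h := j4; rw [sub_eq_iff_eq_add] at h; rw [h]; try abel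
  have hu_saa : IsUnit (star a * a) := by
    rw [hsaa]
    exact CStarAlgebra.isUnit_of_le 1
      (le_add_of_nonneg_right (star_mul_self_nonneg c)) isStrictlyPositive_one
  have hu_aas : IsUnit (a * star a) := by
    rw [haas]
    exact CStarAlgebra.isUnit_of_le 1
      (le_add_of_nonneg_right (mul_star_self_nonneg b)) isStrictlyPositive_one
  have hu_sdd : IsUnit (star d * d) := by
    rw [hsdd]
    exact CStarAlgebra.isUnit_of_le 1
      (le_add_of_nonneg_right (star_mul_self_nonneg b)) isStrictlyPositive_one
  have hu_dds : IsUnit (d * star d) := by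
    rw [hdds]
    exact CStarAlgebra.isUnit_of_le 1
      (le_add_of_nonneg_right (mul_star_self_nonneg c)) isStrictlyPositive_one
  have ha : IsUnit a := by
    refine isUnit_of_left_right (u := Ring.inverse (star a * a) * star a)
      (v := star a * Ring.inverse (a * star a)) ?_ ?_
    · rw [mul_assoc]; exact Ring.inverse_mul_cancel _ hu_saa
    · rw [← mul_assoc]; exact Ring.mul_inverse_cancel _ hu_aas
  have hd : IsUnit d := by
    refine isUnit_of_left_right (u := Ring.inverse (star d * d) * star d)
      (v := star d * Ring.inverse (d * star d)) ?_ ?_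
    · rw [mul_assoc]; exact Ring.inverse_mul_cancel _ hu_sdd
    · rw [← mul_assoc]; exact Ring.mul_inverse_cancel _ hu_dds
  have hsa : IsUnit (star a) := ha.star
  set A := Ring.inverse (star a) with hAdef
  set D := Ring.inverse d with hDdef
  have hA1 : A * star a = 1 := Ring.inverse_mul_cancel _ hsa
  have hA2 : star a * A = 1 := Ring.mul_inverse_cancel _ hsa
  have hD1 : D * d = 1 := Ring.inverse_mul_cancel _ hd
  have hD2 : d * D = 1 := Ring.mul_inverse_cancel _ hd
  have i2' : star a * b = star c * d := sub_eq_zero.mp i2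
  have j2' : a * star c = b * star d := sub_eq_zero.mp j2
  have j3' : c * star a = d * star b := sub_eq_zero.mp j3
  have hAC : A * star c = b * D := by
    calc A * star c = A * star c * (d * D) := by rw [hD2, mul_one]
      _ = A * (star c * d) * D := by rw [← mul_assoc, mul_assoc A (star c) d]
      _ = A * (star a * b) * D := by rw [i2']
      _ = (A * star a) * b * D := by rw [← mul_assoc]
      _ = b * D := by rw [hA1, one_mul]
  have hz1 : (starRingEnd ℂ) z * z = 1 := by
    rw [Complex.conj_mul']; norm_cast; simp [hz]
  have hz2 : z * (starRingEnd ℂ) z = 1 := by rw [mul_comm]; exact hz1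
  -- the main pointwise equivalence
  have hmain : ∀ φ : K, (blk a b c d) φ = z • φ ↔
      (blk ((starRingEnd ℂ z) • A) (b * D) (-(D * c)) (z • D)) φ = φ := by
    intro φ
    have hTiff : (blk a b c d φ = z • φ) ↔
        (a φ.ofLp.1 + b φ.ofLp.2 = z • φ.ofLp.1 ∧ c φ.ofLp.1 + d φ.ofLp.2 = z • φ.ofLp.2) := by
      constructor
      · intro h; exact ⟨congrArg (fun ψ : K => ψ.ofLp.1) h, congrArg (fun ψ : K => ψ.ofLp.2) h⟩
      · rintro ⟨h1, h2⟩; exact K_ext h1 h2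
    have hViff : ((blk ((starRingEnd ℂ z) • A) (b * D) (-(D * c)) (z • D)) φ = φ) ↔
        (((starRingEnd ℂ z) • A) φ.ofLp.1 + (b * D) φ.ofLp.2 = φ.ofLp.1 ∧
          (-(D * c)) φ.ofLp.1 + (z • D) φ.ofLp.2 = φ.ofLp.2) := by
      constructor
      · intro h; exact ⟨congrArg (fun ψ : K => ψ.ofLp.1) h, congrArg (fun ψ : K => ψ.ofLp.2) h⟩
      · rintro ⟨h1, h2⟩; exact K_ext h1 h2
    rw [hTiff, hViff]
    simp only [ContinuousLinearMap.smul_apply, ContinuousLinearMap.mul_apply,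
      ContinuousLinearMap.neg_apply]
    constructor
    · rintro ⟨h1, h2⟩
      constructor
      · -- first component of V φ = φ
        have sA := congrArg (fun v => star a v) h1
        have sC := congrArg (fun v => star c v) h2
        simp only [map_add, map_smul] at sA sC
        have i1x := DFunLike.congr_fun i1 φ.ofLp.1
        simp only [ContinuousLinearMap.sub_apply, ContinuousLinearMap.mul_apply,
          ContinuousLinearMap.one_apply] at i1x
        have i2y := DFunLike.congr_fun i2' φ.ofLp.2
        simp only [ContinuousLinearMap.mul_apply] at i2y
        have e : φ.ofLp.1 = z • (star a φ.ofLp.1) - z • (star c φ.ofLp.2) := by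
          linear_combination (norm := module) sA - sC - i2y - i1x
        have e2 := congrArg (fun v : H => (starRingEnd ℂ z) • v) e
        simp only [smul_sub, smul_smul, hz1, one_smul] at e2
        -- e2 : z̄ • φ.ofLp.1 = star a φ.ofLp.1 - star c φ.ofLp.2
        have eA := congrArg (fun v => A v) e2
        simp only [map_sub, map_smul] at eA
        have r1 : A (star a φ.ofLp.1) = φ.ofLp.1 := by
          rw [← ContinuousLinearMap.mul_apply, hA1, ContinuousLinearMap.one_apply]
        have r2 : A (star c φ.ofLp.2) = b (D φ.ofLp.2) := by
          rw [← ContinuousLinearMap.mul_apply, hAC, ContinuousLinearMap.mul_apply]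
        linear_combination (norm := module) eA + r1 - r2
      · -- second component of V φ = φ
        have hDc := congrArg (fun v => D v) h2
        simp only [map_add, map_smul] at hDc
        have r : D (d φ.ofLp.2) = φ.ofLp.2 := by
          rw [← ContinuousLinearMap.mul_apply, hD1, ContinuousLinearMap.one_apply]
        linear_combination (norm := module) r - hDc
    · rintro ⟨g1, g2⟩
      have r1 : d (D (c φ.ofLp.1)) = c φ.ofLp.1 := by
        rw [← ContinuousLinearMap.mul_apply, hD2, ContinuousLinearMap.one_apply]
      have r2 : d (D φ.ofLp.2) = φ.ofLp.2 := by
        rw [← ContinuousLinearMap.mul_apply, hD2, ContinuousLinearMap.one_apply]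
      have h2 : c φ.ofLp.1 + d φ.ofLp.2 = z • φ.ofLp.2 := by
        have hg := congrArg (fun v => d v) g2
        simp only [map_add, map_neg, map_smul] at hg
        linear_combination (norm := module) z • r2 - hg - r1
      refine ⟨?_, h2⟩
      -- first component of T φ = z φ
      have e1 := congrArg (fun v => star a v) g1
      simp only [map_add, map_smul] at e1
      have rAA : star a (A φ.ofLp.1) = φ.ofLp.1 := by
        rw [← ContinuousLinearMap.mul_apply, hA2, ContinuousLinearMap.one_apply]
      have rYY : star a (b (D φ.ofLp.2)) = star c φ.ofLp.2 := by
        calc star a (b (D φ.ofLp.2)) = (star a * b) (D φ.ofLp.2) := rfl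
          _ = (star c * d) (D φ.ofLp.2) := by rw [i2']
          _ = star c (d (D φ.ofLp.2)) := rfl
          _ = star c φ.ofLp.2 := by rw [r2]
      have eStar : star a φ.ofLp.1 = (starRingEnd ℂ z) • φ.ofLp.1 + star c φ.ofLp.2 := by
        linear_combination (norm := module) ((starRingEnd ℂ) z) • rAA + rYY - e1
      have eA := congrArg (fun v => a v) eStar
      simp only [map_add, map_smul] at eA
      have eC := congrArg (fun v => c v) eStar
      simp only [map_add, map_smul] at eC
      have j1x := DFunLike.congr_fun j1 φ.ofLp.1
      simp only [ContinuousLinearMap.sub_apply, ContinuousLinearMap.mul_apply,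
        ContinuousLinearMap.one_apply] at j1x
      have j2y := DFunLike.congr_fun j2' φ.ofLp.2
      simp only [ContinuousLinearMap.mul_apply] at j2y
      have j3x := DFunLike.congr_fun j3' φ.ofLp.1
      simp only [ContinuousLinearMap.mul_apply] at j3x
      have j4y := DFunLike.congr_fun j4 φ.ofLp.2
      simp only [ContinuousLinearMap.sub_apply, ContinuousLinearMap.mul_apply,
        ContinuousLinearMap.neg_apply, ContinuousLinearMap.one_apply] at j4y
      have zh2 := congrArg (fun v : H => (starRingEnd ℂ z) • v) h2
      simp only [smul_add, smul_smul, hz1, one_smul] at zh2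
      have dEq : d (star b φ.ofLp.1 + (starRingEnd ℂ z) • φ.ofLp.2 - star d φ.ofLp.2) = 0 := by
        simp only [map_add, map_sub, map_smul]
        linear_combination (norm := module) eC - j3x + j4y + zh2
      have hbd : star b φ.ofLp.1 + (starRingEnd ℂ z) • φ.ofLp.2 - star d φ.ofLp.2 = 0 := by
        have h0 := congrArg (fun v => D v) dEq
        simp only [map_zero] at h0
        rwa [← ContinuousLinearMap.mul_apply, hD1, ContinuousLinearMap.one_apply] at h0
      have hbd' := congrArg (fun v => b v) hbd
      simp only [map_add, map_sub, map_smul, map_zero] at hbd'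
      have fin : φ.ofLp.1 = (starRingEnd ℂ z) • a φ.ofLp.1 + (starRingEnd ℂ z) • b φ.ofLp.2 := by
        linear_combination (norm := module) eA + j2y - j1x - hbd'
      have fin2 := congrArg (fun v : H => z • v) fin
      simp only [smul_add, smul_smul, hz2, one_smul] at fin2
      exact fin2.symm
  refine ⟨hmain, ?_⟩
  ext φ
  simp only [LinearMap.mem_ker, ContinuousLinearMap.coe_coe, ContinuousLinearMap.sub_apply,
    ContinuousLinearMap.smul_apply, ContinuousLinearMap.one_apply, sub_eq_zero]
  exact hmain φ
end
end

section
/- Let T be a J-unitary operator on K such that T − z·1 is a Fredholm operator for every z on the unit circle. Then every point z of σ(T) lying on the unit circle is an eigenvalue of T with finite-dimensional eigenspace. -/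
noncomputable section

open ContinuousLinearMap

variable {H : Type*} [NormedAddCommGroup H] [InnerProductSpace ℂ H] [CompleteSpace H]
  [TopologicalSpace.SeparableSpace H]

local notation "K" => WithLp 2 (H × H)

/-- A bounded operator on a Hilbert space is Fredholm: finite-dimensional kernel,
closed range, and finite-dimensional orthogonal complement of the range. -/
def IsFredholmOp (A : K →L[ℂ] K) : Prop :=
  FiniteDimensional ℂ (LinearMap.ker (A : K →ₗ[ℂ] K)) ∧ IsClosed (Set.range A : Set K) ∧
    FiniteDimensional ℂ ↥((LinearMap.range (A : K →ₗ[ℂ] K))ᗮ)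

theorem fundJ_sq : (fundJ : K →L[ℂ] K) * fundJ = 1 := by
  ext x <;> simp [fundJ, blk] <;> rfl

theorem fundJ_invol (x : K) : fundJ (fundJ x) = x := by
  have h : ((fundJ * fundJ : K →L[ℂ] K)) x = (1 : K →L[ℂ] K) x := by rw [fundJ_sq]
  simpa using h

/-- Proposition 4.3 (vii) of the paper: if `T` is an `𝕊¹`-Fredholm
`J`-unitary, every spectral point of `T` on the unit circle is an eigenvalue of finite
multiplicity. -/
theorem s1Fredholm_unit_spectrum_eigenvalue (T : K →L[ℂ] K) (hT : IsJUnitary T)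
    (hF : ∀ z : ℂ, ‖z‖ = 1 → IsFredholmOp (T - z • (1 : K →L[ℂ] K))) :
    ∀ z ∈ spectrum ℂ T, ‖z‖ = 1 →
      LinearMap.ker ((T - z • (1 : K →L[ℂ] K) : K →L[ℂ] K) : K →ₗ[ℂ] K) ≠ ⊥ ∧
      FiniteDimensional ℂ (LinearMap.ker ((T - z • (1 : K →L[ℂ] K) : K →L[ℂ] K) : K →ₗ[ℂ] K)) := by
  intro z hz hz1
  obtain ⟨hker, hcl, -⟩ := hF z hz1
  set A : K →L[ℂ] K := T - z • (1 : K →L[ℂ] K) with hA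
  refine ⟨?_, hker⟩
  by_contra h0
  -- T is invertible; get a two-sided inverse S
  obtain ⟨u, hu⟩ := hT.1
  set S : K →L[ℂ] K := ↑u⁻¹ with hSdef
  have hS1 : T * S = 1 := by rw [← hu]; exact u.mul_inv
  have hS2 : S * T = 1 := by rw [← hu]; exact u.inv_mul
  -- star T = J S J
  have h1 : star T * fundJ = fundJ * S := by
    calc star T * fundJ = star T * fundJ * (T * S) := by rw [hS1, mul_one]
      _ = (star T * fundJ * T) * S := by noncomm_ring
      _ = fundJ * S := by rw [hT.2]
  have hstar : star T = fundJ * S * fundJ := by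
    calc star T = star T * (fundJ * fundJ) := by rw [fundJ_sq, mul_one]
      _ = (star T * fundJ) * fundJ := by noncomm_ring
      _ = fundJ * S * fundJ := by rw [h1]
  have hz0 : z ≠ 0 := by
    intro h; rw [h] at hz1; simp at hz1
  have hzz : z * (starRingEnd ℂ z) = 1 := by
    rw [Complex.mul_conj]
    norm_cast
    rw [Complex.normSq_eq_norm_sq]
    simp only [hz1]
    norm_num
  -- star A is injective
  have hinj : ∀ v : K, star A v = 0 → v = 0 := by
    intro v hv
    have hAeq : star A = star T - (starRingEnd ℂ z) • (1 : K →L[ℂ] K) := by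
      rw [hA]; exact (star_sub T (z • 1)).trans (congrArg (star T - ·) ((star_smul z (1 : K →L[ℂ] K)).trans (by simp)))
    rw [hAeq] at hv
    simp only [sub_apply, smul_apply, one_apply] at hv
    have hv' : star T v = (starRingEnd ℂ z) • v := sub_eq_zero.mp hv
    -- apply J: S (J v) = conj z • (J v)
    rw [hstar] at hv'
    have h3 : fundJ ((fundJ * S * fundJ : K →L[ℂ] K) v) = fundJ ((starRingEnd ℂ z) • v) := by
      rw [hv']
    have h4 : S (fundJ v) = (starRingEnd ℂ z) • fundJ v := by
      have : (fundJ * S * fundJ : K →L[ℂ] K) v = fundJ (S (fundJ v)) := rfl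
      rw [this, fundJ_invol, map_smul] at h3
      exact h3
    -- apply T: J v = conj z • T (J v)
    have h5 : fundJ v = (starRingEnd ℂ z) • T (fundJ v) := by
      have := congrArg T h4
      rw [map_smul] at this
      have hTS : T (S (fundJ v)) = fundJ v := by
        have : (T * S : K →L[ℂ] K) (fundJ v) = (1 : K →L[ℂ] K) (fundJ v) := by rw [hS1]
        simpa using this
      rw [hTS] at this
      exact this
    -- hence T (J v) = z • (J v), so J v ∈ ker A = ⊥
    have h6 : T (fundJ v) = z • fundJ v := by
      have := congrArg (fun w => z • w) h5
      simp only [smul_smul, hzz, one_smul] at this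
      exact this.symm
    have h7 : fundJ v ∈ LinearMap.ker (A : K →ₗ[ℂ] K) := by
      rw [LinearMap.mem_ker]
      show A (fundJ v) = 0
      rw [hA]
      simp [h6]
    rw [h0, Submodule.mem_bot] at h7
    have := congrArg fundJ h7
    rw [fundJ_invol] at this
    simpa using this
  -- hence (range A)ᗮ = ⊥
  have horth : (LinearMap.range (A : K →ₗ[ℂ] K))ᗮ = ⊥ := by
    rw [Submodule.eq_bot_iff]
    intro v hv
    apply hinj
    have hall : ∀ u : K, inner ℂ (A u) v = (0 : ℂ) := by
      intro u
      exact (Submodule.mem_orthogonal _ v).mp hv (A u) (LinearMap.mem_range_self _ u)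
    have hsv : ∀ u : K, inner ℂ u (star A v) = (0 : ℂ) := by
      intro u
      rw [star_eq_adjoint, adjoint_inner_right]
      exact hall u
    have := hsv (star A v)
    rwa [inner_self_eq_zero] at this
  -- range A = ⊤
  have hrange : LinearMap.range (A : K →ₗ[ℂ] K) = ⊤ := by
    have hclosure : (LinearMap.range (A : K →ₗ[ℂ] K)).topologicalClosure = LinearMap.range (A : K →ₗ[ℂ] K) :=
      IsClosed.submodule_topologicalClosure_eq hcl
    have := Submodule.orthogonal_orthogonal_eq_closure (LinearMap.range (A : K →ₗ[ℂ] K))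
    rw [horth, Submodule.bot_orthogonal_eq_top, hclosure] at this
    exact this.symm
  -- A is bijective, hence a unit, contradicting z ∈ spectrum T
  have hbij : Function.Bijective A :=
    ⟨LinearMap.ker_eq_bot.mp h0, LinearMap.range_eq_top.mp hrange⟩
  have hUnit : IsUnit A := ContinuousLinearMap.isUnit_iff_bijective.mpr hbij
  have : IsUnit (algebraMap ℂ (K →L[ℂ] K) z - T) := by
    have : algebraMap ℂ (K →L[ℂ] K) z - T = -A := by
      rw [hA, Algebra.algebraMap_eq_smul_one, neg_sub]
    rw [this]
    exact hUnit.neg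
  exact (spectrum.mem_iff.mp hz) this
end
end
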